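/- Let P(z₁, …, zₙ) be a multilinear polynomial with real coefficients, and for 1 ≤ j ≤ n write P = A_j z_j + B_j, where A_j and B_j are multilinear polynomials in the variables z_i, i ≠ j. If P has the Lee-Yang property, then for every j such that the variable z_j actually occurs in P (i.e., A_j is not the zero polynomial), one has A_j(z₁, …, z_{j−1}, z_{j+1}, …, zₙ) ≠ 0 whenever |z_i| ≥ 1 for all i ≠ j. In particular, A_j itself has the Lee-Yang property. -/

import Mathlib

open scoped Classical
open Finset

private lemma aux_pick (g h a b : ℂ) (hab : a ≠ b) (hgh : g ≠ 0 ∨ h ≠ 0) :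
    ∃ x, (x = a ∨ x = b) ∧ g + x * h ≠ 0 := by
  by_contra hc
  push_neg at hc
  have ha := hc a (Or.inl rfl)
  have hb := hc b (Or.inr rfl)
  have hh : h = 0 := by
    have h1 : (a - b) * h = 0 := by linear_combination ha - hb
    rcases mul_eq_zero.1 h1 with h2 | h2
    · exact absurd (sub_eq_zero.1 h2) hab
    · exact h2
  have hg : g = 0 := by rw [hh] at ha; simpa using ha
  rcases hgh with h1 | h1
  · exact h1 hg
  · exact h1 hh

private lemma aux_dense {n : ℕ} (u : Finset (Fin n)) (c : Finset (Fin n) → ℂ)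
    (S₀ : Finset (Fin n)) (hS₀ : S₀ ⊆ u) (hc : c S₀ ≠ 0)
    (a b : Fin n → ℂ) (hab : ∀ i, a i ≠ b i) :
    ∃ t : Fin n → ℂ, (∀ i ∈ u, t i = a i ∨ t i = b i) ∧
      ∑ S ∈ u.powerset, c S * ∏ i ∈ S, t i ≠ 0 := by
  induction u using Finset.induction_on generalizing c S₀ with
  | empty =>
    refine ⟨a, by simp, ?_⟩
    have hS : S₀ = ∅ := Finset.subset_empty.1 hS₀
    subst hS
    simpa using hc
  | @insert k u hk IH =>
    have key : ∃ t' : Fin n → ℂ, (∀ i ∈ u, t' i = a i ∨ t' i = b i) ∧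
        ((∑ S ∈ u.powerset, c S * ∏ i ∈ S, t' i) ≠ 0 ∨
         (∑ S ∈ u.powerset, c (insert k S) * ∏ i ∈ S, t' i) ≠ 0) := by
      by_cases hkS : k ∈ S₀
      · have hsub : S₀.erase k ⊆ u := by
          intro x hx
          have hx1 := Finset.mem_erase.1 hx
          have := hS₀ hx1.2
          rcases Finset.mem_insert.1 this with h | h
          · exact absurd h hx1.1
          · exact h
        have hc' : c (insert k (S₀.erase k)) ≠ 0 := by
          rwa [Finset.insert_erase hkS]
        obtain ⟨t', h1, h2⟩ := IH (fun S => c (insert k S)) (S₀.erase k) hsub hc'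
        exact ⟨t', h1, Or.inr h2⟩
      · have hsub : S₀ ⊆ u := by
          intro x hx
          rcases Finset.mem_insert.1 (hS₀ hx) with h | h
          · exact absurd (h ▸ hx) hkS
          · exact h
        obtain ⟨t', h1, h2⟩ := IH c S₀ hsub hc
        exact ⟨t', h1, Or.inl h2⟩
    obtain ⟨t', ht'mem, hgh⟩ := key
    obtain ⟨x, hx, hne⟩ := aux_pick _ _ (a k) (b k) (hab k) hgh
    refine ⟨Function.update t' k x, ?_, ?_⟩
    · intro i hi
      rcases Finset.mem_insert.1 hi with h | h
      · subst h; rw [Function.update_self]; exact hx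
      · have hik : i ≠ k := fun he => hk (he ▸ h)
        rw [Function.update_of_ne hik]; exact ht'mem i h
    · rw [Finset.sum_powerset_insert hk]
      have hprod : ∀ S ∈ u.powerset, ∀ (d : ℂ),
          d * ∏ i ∈ S, Function.update t' k x i = d * ∏ i ∈ S, t' i := by
        intro S hS d
        congr 1
        refine Finset.prod_congr rfl fun i hi => ?_
        have hik : i ≠ k := fun he => hk (he ▸ (Finset.mem_powerset.1 hS hi))
        exact Function.update_of_ne hik _ _
      have e1 : ∑ S ∈ u.powerset, c S * ∏ i ∈ S, Function.update t' k x i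
          = ∑ S ∈ u.powerset, c S * ∏ i ∈ S, t' i :=
        Finset.sum_congr rfl fun S hS => hprod S hS _
      have e2 : ∑ S ∈ u.powerset, c (insert k S) * ∏ i ∈ insert k S, Function.update t' k x i
          = x * ∑ S ∈ u.powerset, c (insert k S) * ∏ i ∈ S, t' i := by
        rw [Finset.mul_sum]
        refine Finset.sum_congr rfl fun S hS => ?_
        have hkS : k ∉ S := fun hks => hk (Finset.mem_powerset.1 hS hks)
        rw [Finset.prod_insert hkS, Function.update_self, hprod S hS]
        ring
      rw [e1, e2]
      intro hcon
      apply hne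
      linear_combination hcon

private noncomputable def mfun {n : ℕ} (p : Finset (Fin n) → ℝ) (j : Fin n) (w : Fin n → ℂ) : ℂ :=
  ∑ S ∈ (univ : Finset (Finset (Fin n))).filter (fun S => j ∉ S),
    (p (insert j S) : ℂ) * ∏ i ∈ S, w i

private noncomputable def bfun {n : ℕ} (p : Finset (Fin n) → ℝ) (j : Fin n) (w : Fin n → ℂ) : ℂ :=
  ∑ S ∈ (univ : Finset (Finset (Fin n))).filter (fun S => j ∉ S),
    (p S : ℂ) * ∏ i ∈ S, w i

private lemma aux_indep {n : ℕ} (q : Finset (Fin n) → ℂ) (j : Fin n) (w : Fin n → ℂ) (lam : ℂ) :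
    ∑ S ∈ (univ : Finset (Finset (Fin n))).filter (fun S => j ∉ S),
      q S * ∏ i ∈ S, (Function.update w j lam) i
    = ∑ S ∈ (univ : Finset (Finset (Fin n))).filter (fun S => j ∉ S),
      q S * ∏ i ∈ S, w i := by
  refine Finset.sum_congr rfl fun S hS => ?_
  have hjS : j ∉ S := (Finset.mem_filter.1 hS).2
  congr 1
  refine Finset.prod_congr rfl fun i hi => ?_
  have hij : i ≠ j := fun he => hjS (he ▸ hi)
  exact Function.update_of_ne hij _ _

private lemma aux_split {n : ℕ} (p : Finset (Fin n) → ℝ) (j : Fin n) (u : Fin n → ℂ) :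
    (∑ S : Finset (Fin n), (p S : ℂ) * ∏ i ∈ S, u i) = mfun p j u * u j + bfun p j u := by
  rw [← Finset.sum_filter_add_sum_filter_not univ (fun S => j ∉ S)]
  have h2 : ∑ S ∈ (univ : Finset (Finset (Fin n))).filter (fun S => ¬ j ∉ S),
      (p S : ℂ) * ∏ i ∈ S, u i = mfun p j u * u j := by
    have hb : ∑ S ∈ (univ : Finset (Finset (Fin n))).filter (fun S => ¬ j ∉ S),
        (p S : ℂ) * ∏ i ∈ S, u i
        = ∑ S ∈ (univ : Finset (Finset (Fin n))).filter (fun S => j ∉ S),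
          ((p (insert j S) : ℂ) * ∏ i ∈ S, u i) * u j := by
      refine Finset.sum_bij' (fun S _ => S.erase j) (fun S _ => insert j S)
        ?_ ?_ ?_ ?_ ?_
      · intro S hS
        simp [Finset.mem_filter] at hS ⊢
      · intro S hS
        simp [Finset.mem_filter] at hS ⊢
      · intro S hS
        have hjS : j ∈ S := by simpa using (Finset.mem_filter.1 hS).2
        exact Finset.insert_erase hjS
      · intro S hS
        have hjS : j ∉ S := (Finset.mem_filter.1 hS).2
        exact Finset.erase_insert hjS
      · intro S hS
        have hjS : j ∈ S := by simpa using (Finset.mem_filter.1 hS).2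
        rw [Finset.insert_erase hjS, ← Finset.mul_prod_erase S u hjS]
        ring
    rw [hb, ← Finset.sum_mul]
    rfl
  rw [h2]
  rw [add_comm]
  rfl

private lemma aux_bound {n : ℕ} (p : Finset (Fin n) → ℝ)
    (hLY : ∀ z : Fin n → ℂ, (∀ i, 1 ≤ ‖z i‖) →
      (∃ i, 1 < ‖z i‖) →
      (∑ S : Finset (Fin n), (p S : ℂ) * ∏ i ∈ S, z i) ≠ 0)
    (j : Fin n) (w : Fin n → ℂ) (hw : ∀ i, i ≠ j → 1 < ‖w i‖)
    (hm : mfun p j w ≠ 0) : ‖bfun p j w‖ ≤ ‖mfun p j w‖ := by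
  by_contra hlt
  push_neg at hlt
  set lam : ℂ := -(bfun p j w / mfun p j w) with hlam
  have habs : 1 < ‖lam‖ := by
    rw [hlam, norm_neg, norm_div]
    exact (one_lt_div (norm_pos_iff.2 hm)).2 hlt
  have hcond1 : ∀ i, 1 ≤ ‖Function.update w j lam i‖ := by
    intro i
    by_cases hij : i = j
    · subst hij; rw [Function.update_self]; exact habs.le
    · rw [Function.update_of_ne hij]; exact (hw i hij).le
  have hcond2 : ∃ i, 1 < ‖Function.update w j lam i‖ :=
    ⟨j, by rw [Function.update_self]; exact habs⟩
  apply hLY (Function.update w j lam) hcond1 hcond2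
  rw [aux_split p j]
  have e1 : mfun p j (Function.update w j lam) = mfun p j w := aux_indep _ j w lam
  have e2 : bfun p j (Function.update w j lam) = bfun p j w := aux_indep _ j w lam
  rw [e1, e2, Function.update_self, hlam]
  field_simp
  ring


/-- A multilinear polynomial with real coefficients is represented by its coefficient
family `p : Finset (Fin n) → ℝ`, so `P(z) = Σ_{S ⊆ [n]} p_S ∏_{i∈S} z_i`.  If `P` has
the Lee-Yang property then, for every `j` such that the variable `z_j` actually occurs
in `P` (i.e. the coefficient polynomial `A_j` of `z_j` is not identically zero), the
polynomial `A_j(z) = Σ_{S ∌ j} p_{S∪{j}} ∏_{i∈S} z_i` is nonzero whenever `|z_i| ≥ 1`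
for all `i ≠ j`; in particular `A_j` has the Lee-Yang property. -/
theorem stmt6 {n : ℕ} (p : Finset (Fin n) → ℝ)
    (hLY : ∀ z : Fin n → ℂ, (∀ i, 1 ≤ ‖z i‖) →
      (∃ i, 1 < ‖z i‖) →
      (∑ S : Finset (Fin n), (p S : ℂ) * ∏ i ∈ S, z i) ≠ 0)
    (j : Fin n)
    (hdeg : ∃ S : Finset (Fin n), j ∉ S ∧ p (insert j S) ≠ 0)
    (z : Fin n → ℂ) (hz : ∀ i, i ≠ j → 1 ≤ ‖z i‖) :
    (∑ S ∈ (univ : Finset (Finset (Fin n))).filter (fun S => j ∉ S),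
        (p (insert j S) : ℂ) * ∏ i ∈ S, z i) ≠ 0 := by
  show mfun p j z ≠ 0
  intro h0
  obtain ⟨S₀, hjS₀, hpS₀⟩ := hdeg
  have hF : (univ : Finset (Finset (Fin n))).filter (fun S => j ∉ S)
      = (univ.erase j).powerset := by
    ext S; simp [Finset.subset_erase]
  have hS₀u : S₀ ⊆ univ.erase j := Finset.subset_erase.2 ⟨Finset.subset_univ _, hjS₀⟩
  have hzne : ∀ i, i ≠ j → z i ≠ 0 := by
    intro i hij hzi
    have h := hz i hij
    rw [hzi] at h
    norm_num at h
  have hc : (p (insert j S₀) : ℂ) * ∏ i ∈ S₀, z i ≠ 0 :=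
    mul_ne_zero (Complex.ofReal_ne_zero.2 hpS₀)
      (Finset.prod_ne_zero_iff.2 fun i hi =>
        hzne i (fun he => hjS₀ (he ▸ hi)))
  -- a sequence of good points
  have hex : ∀ k : ℕ, ∃ t : Fin n → ℂ,
      (∀ i ∈ univ.erase j,
        t i = ((1 + 1/((k:ℝ)+1) : ℝ) : ℂ) ∨ t i = ((1 + 2/((k:ℝ)+1) : ℝ) : ℂ)) ∧
      mfun p j (fun i => t i * z i) ≠ 0 := by
    intro k
    have hk1 : (0:ℝ) < (k:ℝ) + 1 := by positivity
    have hab : ∀ i : Fin n,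
        ((1 + 1/((k:ℝ)+1) : ℝ) : ℂ) ≠ ((1 + 2/((k:ℝ)+1) : ℝ) : ℂ) := by
      intro i h
      rw [Complex.ofReal_inj] at h
      have h2 : (1:ℝ)/((k:ℝ)+1) = 2/((k:ℝ)+1) := by linarith
      rw [div_eq_div_iff hk1.ne' hk1.ne'] at h2
      nlinarith
    obtain ⟨t, htm, hts⟩ := aux_dense (univ.erase j)
      (fun S => (p (insert j S) : ℂ) * ∏ i ∈ S, z i) S₀ hS₀u hc _ _ hab
    refine ⟨t, htm, ?_⟩
    have heq : mfun p j (fun i => t i * z i)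
        = ∑ S ∈ (univ.erase j).powerset,
            ((p (insert j S) : ℂ) * ∏ i ∈ S, z i) * ∏ i ∈ S, t i := by
      unfold mfun
      rw [hF]
      refine Finset.sum_congr rfl fun S hS => ?_
      rw [Finset.prod_mul_distrib]
      ring
    rw [heq]
    exact hts
  choose t ht1 ht2 using hex
  set v : ℕ → Fin n → ℂ := fun k => Function.update (fun i => t k i * z i) j (z j) with hv
  have hmv : ∀ k, mfun p j (v k) ≠ 0 := by
    intro k
    have h : mfun p j (v k) = mfun p j (fun i => t k i * z i) := aux_indep _ j _ _
    rw [h]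
    exact ht2 k
  have habsv : ∀ k, ∀ i, i ≠ j → 1 < ‖v k i‖ := by
    intro k i hij
    have hvi : v k i = t k i * z i := Function.update_of_ne hij _ _
    have hk1 : (0:ℝ) < 1/((k:ℝ)+1) := by positivity
    have hk2 : (0:ℝ) < 2/((k:ℝ)+1) := by positivity
    have hzi := hz i hij
    rcases ht1 k i (Finset.mem_erase.2 ⟨hij, Finset.mem_univ i⟩) with h | h
    · rw [hvi, h, norm_mul, Complex.norm_real, Real.norm_eq_abs, abs_of_pos (by linarith)]
      nlinarith
    · rw [hvi, h, norm_mul, Complex.norm_real, Real.norm_eq_abs, abs_of_pos (by linarith)]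
      nlinarith
  have hvlim : Filter.Tendsto v Filter.atTop (nhds z) := by
    rw [tendsto_pi_nhds]
    intro i
    by_cases hij : i = j
    · have he : (fun k => v k i) = fun _ => z i := by
        funext k
        rw [hij]
        exact Function.update_self _ _ _
      rw [he]
      exact tendsto_const_nhds
    · have hg : Filter.Tendsto (fun k : ℕ => 2 / ((k : ℝ) + 1)) Filter.atTop (nhds 0) := by
        have h : Filter.Tendsto (fun k : ℕ => 1 / ((k : ℝ) + 1)) Filter.atTop (nhds 0) :=
          tendsto_one_div_add_atTop_nhds_zero_nat
        have h2 := h.const_mul (2:ℝ)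
        simpa [mul_one_div, div_eq_mul_inv] using h2
      have hti : Filter.Tendsto (fun k => t k i) Filter.atTop (nhds 1) := by
        rw [tendsto_iff_norm_sub_tendsto_zero]
        refine squeeze_zero (g := fun k : ℕ => 2/((k:ℝ)+1)) (fun k => norm_nonneg _)
          (fun k => ?_) hg
        have hk1 : (0:ℝ) ≤ 1/((k:ℝ)+1) := by positivity
        have hk2 : (0:ℝ) ≤ 2/((k:ℝ)+1) := by positivity
        rcases ht1 k i (Finset.mem_erase.2 ⟨hij, Finset.mem_univ i⟩) with h | h <;>
          rw [h]
        · have he : ((1 + 1/((k:ℝ)+1) : ℝ) : ℂ) - 1 = ((1/((k:ℝ)+1) : ℝ) : ℂ) := by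
            push_cast; ring
          rw [he, Complex.norm_real, Real.norm_eq_abs, abs_of_nonneg hk1]
          show (1:ℝ)/((k:ℝ)+1) ≤ 2/((k:ℝ)+1)
          have h3 : 2/((k:ℝ)+1) = 2*(1/((k:ℝ)+1)) := by ring
          rw [h3]
          linarith
        · have he : ((1 + 2/((k:ℝ)+1) : ℝ) : ℂ) - 1 = ((2/((k:ℝ)+1) : ℝ) : ℂ) := by
            push_cast; ring
          rw [he, Complex.norm_real, Real.norm_eq_abs, abs_of_nonneg hk2]
      have hmul := hti.mul_const (z i)
      rw [one_mul] at hmul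
      have he : (fun k => v k i) = fun k => t k i * z i :=
        funext fun k => Function.update_of_ne hij _ _
      rw [he]
      exact hmul
  have hmc : Continuous (mfun p j) := by
    unfold mfun
    exact continuous_finset_sum _ fun S _ =>
      continuous_const.mul (continuous_finset_prod _ fun i _ => continuous_apply i)
  have hbc : Continuous (bfun p j) := by
    unfold bfun
    exact continuous_finset_sum _ fun S _ =>
      continuous_const.mul (continuous_finset_prod _ fun i _ => continuous_apply i)
  have hmlim : Filter.Tendsto (fun k => ‖mfun p j (v k)‖) Filter.atTop (nhds 0) := by
    have h1 : Filter.Tendsto (fun k => mfun p j (v k)) Filter.atTop (nhds (mfun p j z)) :=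
      (hmc.tendsto z).comp hvlim
    rw [h0] at h1
    have h2 := (continuous_norm.tendsto 0).comp h1
    simpa [Function.comp_def] using h2
  have hblim : Filter.Tendsto (fun k => ‖bfun p j (v k)‖) Filter.atTop
      (nhds (‖bfun p j z‖)) := by
    have h1 : Filter.Tendsto (fun k => bfun p j (v k)) Filter.atTop (nhds (bfun p j z)) :=
      (hbc.tendsto z).comp hvlim
    exact (continuous_norm.tendsto _).comp h1
  have hble : ‖bfun p j z‖ ≤ 0 :=
    le_of_tendsto_of_tendsto' hblim hmlim
      (fun k => aux_bound p hLY j (v k) (habsv k) (hmv k))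
  have hb0 : bfun p j z = 0 := by
    have h := le_antisymm hble (norm_nonneg _)
    rwa [norm_eq_zero] at h
  -- final contradiction
  have hcond1 : ∀ i, 1 ≤ ‖Function.update z j 2 i‖ := by
    intro i
    by_cases hij : i = j
    · subst hij; rw [Function.update_self]; norm_num
    · rw [Function.update_of_ne hij]; exact hz i hij
  have hcond2 : ∃ i, 1 < ‖Function.update z j 2 i‖ :=
    ⟨j, by rw [Function.update_self]; norm_num⟩
  apply hLY (Function.update z j 2) hcond1 hcond2
  rw [aux_split p j]
  have e1 : mfun p j (Function.update z j 2) = mfun p j z := aux_indep _ j z 2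
  have e2 : bfun p j (Function.update z j 2) = bfun p j z := aux_indep _ j z 2
  rw [e1, e2, h0, hb0]
  ring
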